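/- Suppose nonnegative reals x on arcs A (both orientations of edges of G) satisfy the flow-balance constraints with root s (net outflow |V|−1 at s and net inflow 1 at each other vertex), and let Y = { {i,j} ∈ E : x_{ij} > 0 or x_{ji} > 0 }. Then the subgraph (V, Y) is connected. -/
import Mathlib


open SimpleGraph Finset
open scoped Classical

/-- If nonnegative reals `x` on the arcs of `G` satisfy the flow-balance
constraints with root `s` (net outflow `|V| - 1` at `s`, net inflow `1`
elsewhere), then the subgraph on the edges carrying positive flow is
connected. -/
theorem support_of_flow_connected {V : Type*} [Fintype V] [Nonempty V]
    (G : SimpleGraph V) (s : V) (x : V → V → ℝ)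
    (hsupp : ∀ i j, ¬ G.Adj i j → x i j = 0)
    (hnonneg : ∀ i j, 0 ≤ x i j)
    (hbal : ∀ i : V,
      (∑ j : V, x j i) - (∑ j : V, x i j) =
        if i = s then -((Fintype.card V : ℝ) - 1) else 1) :
    (SimpleGraph.fromEdgeSet
        {e : Sym2 V | ∃ i j, e = s(i, j) ∧ (0 < x i j ∨ 0 < x j i)}).Connected := by
  set H := SimpleGraph.fromEdgeSet
      {e : Sym2 V | ∃ i j, e = s(i, j) ∧ (0 < x i j ∨ 0 < x j i)} with hH
  have hadj : ∀ i j, (0 < x i j ∨ 0 < x j i) → H.Adj i j := by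
    intro i j h
    have hGadj : G.Adj i j := by
      rcases h with h | h
      · by_contra hn; exact absurd (hsupp i j hn) (ne_of_gt h)
      · by_contra hn
        exact absurd (hsupp j i (fun a => hn a.symm)) (ne_of_gt h)
    rw [hH, SimpleGraph.fromEdgeSet_adj]
    exact ⟨⟨i, j, rfl, h⟩, hGadj.ne⟩
  have hr : ∀ v, H.Reachable s v := by
    by_contra hc
    push_neg at hc
    obtain ⟨v, hv⟩ := hc
    set T : Finset V := Finset.univ.filter (fun u => ¬ H.Reachable s u) with hT
    have hsT : s ∉ T := by simp [hT, SimpleGraph.Reachable.refl]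
    have hvT : v ∈ T := by simp [hT, hv]
    have hzero : ∀ i ∈ T, ∀ j ∉ T, x i j = 0 ∧ x j i = 0 := by
      intro i hi j hj
      simp only [hT, Finset.mem_filter, Finset.mem_univ, true_and, not_not] at hi hj
      constructor
      · by_contra hx
        have hij := hadj i j (Or.inl (lt_of_le_of_ne (hnonneg i j) (Ne.symm hx)))
        exact hi (hj.trans hij.symm.reachable)
      · by_contra hx
        have hij := hadj j i (Or.inl (lt_of_le_of_ne (hnonneg j i) (Ne.symm hx)))
        exact hi (hj.trans hij.reachable)
    have h1 : ∑ i ∈ T, ((∑ j : V, x j i) - ∑ j : V, x i j) = (T.card : ℝ) := by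
      rw [Finset.sum_congr rfl (fun i hi => by
        rw [hbal i, if_neg (by rintro rfl; exact hsT hi)])]
      simp
    have hin : ∀ i ∈ T, (∑ j : V, x j i) = ∑ j ∈ T, x j i := by
      intro i hi
      rw [← Finset.sum_add_sum_compl T (fun j => x j i)]
      have : ∑ j ∈ Tᶜ, x j i = 0 :=
        Finset.sum_eq_zero fun j hj =>
          (hzero i hi j (Finset.mem_compl.mp hj)).2
      rw [this, add_zero]
    have hout : ∀ i ∈ T, (∑ j : V, x i j) = ∑ j ∈ T, x i j := by
      intro i hi
      rw [← Finset.sum_add_sum_compl T (fun j => x i j)]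
      have : ∑ j ∈ Tᶜ, x i j = 0 :=
        Finset.sum_eq_zero fun j hj =>
          (hzero i hi j (Finset.mem_compl.mp hj)).1
      rw [this, add_zero]
    have h2 : ∑ i ∈ T, ((∑ j : V, x j i) - ∑ j : V, x i j) = 0 := by
      rw [Finset.sum_congr rfl (fun i hi => by rw [hin i hi, hout i hi])]
      rw [Finset.sum_sub_distrib, Finset.sum_comm, sub_self]
    rw [h2] at h1
    have : T.card = 0 := by exact_mod_cast h1.symm
    rw [Finset.card_eq_zero] at this
    rw [this] at hvT
    exact absurd hvT (Finset.notMem_empty v)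
  exact SimpleGraph.Connected.mk (fun u v => (hr u).symm.trans (hr v))
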